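/- The Hedge policy is Lipschitz from the supremum norm to the ℓ1-norm with constant 2(1−η)β: for all x, y ∈ ℝ^M, ‖σ(x) − σ(y)‖₁ = Σ_{j=1}^M |σ(x,j) − σ(y,j)| ≤ 2(1−η)β · ‖x − y‖_∞, where ‖x − y‖_∞ = max_j |x(j) − y(j)|. -/

import Mathlib

open Finset


lemma sinh4 {t : ℝ} (h0 : 0 ≤ t) (h1 : t ≤ 1) : Real.exp t - Real.exp (-t) ≤ 4 * t := by
  have hb := Real.exp_bound' h0 h1 (n := 3) (by norm_num)
  have h2 : 1 - t ≤ Real.exp (-t) := by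
    have := Real.add_one_le_exp (-t); linarith
  have hs : ∑ i ∈ Finset.range 3, t ^ i / i.factorial = 1 + t + t^2/2 := by
    simp [Finset.sum_range_succ, Nat.factorial]
  rw [hs] at hb
  norm_num [Nat.factorial] at hb
  have ht2 : t^2 ≤ t := by nlinarith
  have ht3 : t^3 ≤ t := by nlinarith [pow_nonneg h0 2]
  linarith

lemma onesided {t u v u' v' : ℝ} (ht0 : 0 ≤ t) (ht1 : t ≤ 1)
    (hu0 : 0 ≤ u) (hv0 : 0 ≤ v) (hu'0 : 0 ≤ u') (hv'0 : 0 ≤ v')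
    (huv : u ≤ Real.exp t * v) (hvu : v ≤ Real.exp t * u)
    (huv' : u' ≤ Real.exp t * v') (hvu' : v' ≤ Real.exp t * u') :
    u * (v + v') - (u + u') * v ≤ t * ((u + u') * (v + v')) := by
  have hexp : Real.exp (-t) * Real.exp t = 1 := by rw [← Real.exp_add]; simp
  have hE : 0 < Real.exp t := Real.exp_pos t
  have hE' : 0 < Real.exp (-t) := Real.exp_pos (-t)
  have hc0 : 0 ≤ Real.exp t - Real.exp (-t) := by
    have := Real.exp_le_exp.2 (by linarith : -t ≤ t); linarith
  have hc4 : Real.exp t - Real.exp (-t) ≤ 4 * t := sinh4 ht0 ht1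
  have hkey : u * (v + v') - (u + u') * v = u * v' - v * u' := by ring
  rw [hkey]
  have hd1 : u * v' - v * u' ≤ (Real.exp t - Real.exp (-t)) * (v * v') := by
    have h1' : u * v' ≤ Real.exp t * (v * v') := by nlinarith
    have h2' : Real.exp (-t) * (v * v') ≤ v * u' := by
      have h3' : Real.exp (-t) * v' ≤ u' := by nlinarith
      nlinarith
    nlinarith
  have hd2 : u * v' - v * u' ≤ (Real.exp t - Real.exp (-t)) * (u * u') := by
    have h1' : u * v' ≤ Real.exp t * (u * u') := by nlinarith
    have h2' : Real.exp (-t) * (u * u') ≤ v * u' := by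
      have h3' : Real.exp (-t) * u ≤ v := by nlinarith
      nlinarith
    nlinarith
  by_cases hDpos : u * v' - v * u' ≤ 0
  · have : 0 ≤ t * ((u + u') * (v + v')) := by positivity
    linarith
  · push_neg at hDpos
    have hsq : (u * v' - v * u') ^ 2
        ≤ (Real.exp t - Real.exp (-t)) ^ 2 * ((u * u') * (v * v')) := by
      calc (u * v' - v * u') ^ 2 = (u * v' - v * u') * (u * v' - v * u') := by ring
        _ ≤ ((Real.exp t - Real.exp (-t)) * (u * u'))
            * ((Real.exp t - Real.exp (-t)) * (v * v')) := by
            apply mul_le_mul hd2 hd1 hDpos.le; positivity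
        _ = (Real.exp t - Real.exp (-t)) ^ 2 * ((u * u') * (v * v')) := by ring
    have hc2 : (Real.exp t - Real.exp (-t)) ^ 2 ≤ 16 * t ^ 2 := by
      calc (Real.exp t - Real.exp (-t)) ^ 2 ≤ (4 * t) ^ 2 := pow_le_pow_left₀ hc0 hc4 2
        _ = 16 * t ^ 2 := by ring
    have hP0 : 0 ≤ u * u' := mul_nonneg hu0 hu'0
    have hQ0 : 0 ≤ v * v' := mul_nonneg hv0 hv'0
    have h4u : 4 * (u * u') ≤ (u + u') ^ 2 := by nlinarith [sq_nonneg (u - u')]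
    have h4v : 4 * (v * v') ≤ (v + v') ^ 2 := by nlinarith [sq_nonneg (v - v')]
    have hPQ : 16 * ((u * u') * (v * v')) ≤ (u + u') ^ 2 * (v + v') ^ 2 := by
      have := mul_le_mul h4u h4v (by positivity) (sq_nonneg (u + u'))
      linarith
    have hstep : (Real.exp t - Real.exp (-t)) ^ 2 * ((u * u') * (v * v'))
        ≤ t ^ 2 * ((u + u') ^ 2 * (v + v') ^ 2) := by
      calc (Real.exp t - Real.exp (-t)) ^ 2 * ((u * u') * (v * v'))
          ≤ (16 * t ^ 2) * ((u * u') * (v * v')) :=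
            mul_le_mul_of_nonneg_right hc2 (mul_nonneg hP0 hQ0)
        _ = t ^ 2 * (16 * ((u * u') * (v * v'))) := by ring
        _ ≤ t ^ 2 * ((u + u') ^ 2 * (v + v') ^ 2) :=
            mul_le_mul_of_nonneg_left hPQ (sq_nonneg t)
    have hfin : (u * v' - v * u') ^ 2 ≤ (t * ((u + u') * (v + v'))) ^ 2 := by
      calc (u * v' - v * u') ^ 2
          ≤ (Real.exp t - Real.exp (-t)) ^ 2 * ((u * u') * (v * v')) := hsq
        _ ≤ t ^ 2 * ((u + u') ^ 2 * (v + v') ^ 2) := hstep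
        _ = (t * ((u + u') * (v + v'))) ^ 2 := by ring
    have hR0 : 0 ≤ t * ((u + u') * (v + v')) := by positivity
    have hs := Real.sqrt_le_sqrt hfin
    rwa [Real.sqrt_sq hDpos.le, Real.sqrt_sq hR0] at hs

lemma tv_bound {M : ℕ} [NeZero M] (a b : Fin M → ℝ) (t : ℝ) (ht0 : 0 ≤ t)
    (hab : ∀ j, |a j - b j| ≤ t) :
    ∑ j : Fin M, |Real.exp (a j) / (∑ k, Real.exp (a k))
      - Real.exp (b j) / (∑ k, Real.exp (b k))| ≤ 2 * t := by
  set A := ∑ k, Real.exp (a k) with hA_def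
  set B := ∑ k, Real.exp (b k) with hB_def
  have hA : 0 < A := Finset.sum_pos (fun k _ => Real.exp_pos _) Finset.univ_nonempty
  have hB : 0 < B := Finset.sum_pos (fun k _ => Real.exp_pos _) Finset.univ_nonempty
  have hsumA : ∑ j : Fin M, Real.exp (a j) / A = 1 := by
    rw [← Finset.sum_div]; exact div_self hA.ne'
  have hsumB : ∑ j : Fin M, Real.exp (b j) / B = 1 := by
    rw [← Finset.sum_div]; exact div_self hB.ne'
  by_cases h1 : 1 ≤ t
  · calc ∑ j : Fin M, |Real.exp (a j) / A - Real.exp (b j) / B|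
        ≤ ∑ j : Fin M, (Real.exp (a j) / A + Real.exp (b j) / B) := by
          apply Finset.sum_le_sum
          intro j _
          have h2 : 0 ≤ Real.exp (a j) / A := by positivity
          have h3 : 0 ≤ Real.exp (b j) / B := by positivity
          rw [abs_sub_le_iff]; constructor <;> linarith
      _ = 2 := by rw [Finset.sum_add_distrib, hsumA, hsumB]; norm_num
      _ ≤ 2 * t := by linarith
  · push_neg at h1
    have key1 : ∀ j, Real.exp (a j) ≤ Real.exp t * Real.exp (b j) := by
      intro j
      rw [← Real.exp_add]
      apply Real.exp_le_exp.2
      have := (abs_le.1 (hab j)).2; linarith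
    have key2 : ∀ j, Real.exp (b j) ≤ Real.exp t * Real.exp (a j) := by
      intro j
      rw [← Real.exp_add]
      apply Real.exp_le_exp.2
      have := (abs_le.1 (hab j)).1; linarith
    set S := Finset.univ.filter (fun j : Fin M => Real.exp (b j) / B < Real.exp (a j) / A)
      with hS
    set u := ∑ j ∈ S, Real.exp (a j) with hu
    set v := ∑ j ∈ S, Real.exp (b j) with hv
    set u' := ∑ j ∈ Sᶜ, Real.exp (a j) with hu'
    set v' := ∑ j ∈ Sᶜ, Real.exp (b j) with hv'
    have hAuu : u + u' = A := Finset.sum_add_sum_compl S _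
    have hBvv : v + v' = B := Finset.sum_add_sum_compl S _
    have hu0 : 0 ≤ u := Finset.sum_nonneg fun j _ => (Real.exp_pos _).le
    have hv0 : 0 ≤ v := Finset.sum_nonneg fun j _ => (Real.exp_pos _).le
    have hu'0 : 0 ≤ u' := Finset.sum_nonneg fun j _ => (Real.exp_pos _).le
    have hv'0 : 0 ≤ v' := Finset.sum_nonneg fun j _ => (Real.exp_pos _).le
    have huv : u ≤ Real.exp t * v := by
      rw [hu, hv, Finset.mul_sum]; exact Finset.sum_le_sum fun j _ => key1 j
    have hvu : v ≤ Real.exp t * u := by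
      rw [hu, hv, Finset.mul_sum]; exact Finset.sum_le_sum fun j _ => key2 j
    have huv' : u' ≤ Real.exp t * v' := by
      rw [hu', hv', Finset.mul_sum]; exact Finset.sum_le_sum fun j _ => key1 j
    have hvu' : v' ≤ Real.exp t * u' := by
      rw [hu', hv', Finset.mul_sum]; exact Finset.sum_le_sum fun j _ => key2 j
    have hsplit : ∑ j : Fin M, |Real.exp (a j) / A - Real.exp (b j) / B|
        = 2 * (u / A - v / B) := by
      rw [← Finset.sum_add_sum_compl S]
      have e1 : ∑ j ∈ S, |Real.exp (a j) / A - Real.exp (b j) / B|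
          = ∑ j ∈ S, (Real.exp (a j) / A - Real.exp (b j) / B) := by
        apply Finset.sum_congr rfl
        intro j hj
        rw [hS, Finset.mem_filter] at hj
        rw [abs_of_nonneg (by linarith [hj.2])]
      have e2 : ∑ j ∈ Sᶜ, |Real.exp (a j) / A - Real.exp (b j) / B|
          = ∑ j ∈ Sᶜ, (Real.exp (b j) / B - Real.exp (a j) / A) := by
        apply Finset.sum_congr rfl
        intro j hj
        rw [Finset.mem_compl, hS, Finset.mem_filter] at hj
        push_neg at hj
        rw [abs_of_nonpos (by linarith [hj (Finset.mem_univ j)])]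
        ring
      rw [e1, e2]
      have e3 : ∑ j ∈ S, (Real.exp (a j) / A - Real.exp (b j) / B)
          = u / A - v / B := by
        rw [Finset.sum_sub_distrib, hu, hv, Finset.sum_div, Finset.sum_div]
      have e4 : ∑ j ∈ Sᶜ, (Real.exp (b j) / B - Real.exp (a j) / A)
          = v' / B - u' / A := by
        rw [Finset.sum_sub_distrib, hu', hv', Finset.sum_div, Finset.sum_div]
      rw [e3, e4]
      have h5 : u / A + u' / A = 1 := by rw [← add_div, hAuu]; exact div_self hA.ne'
      have h6 : v / B + v' / B = 1 := by rw [← add_div, hBvv]; exact div_self hB.ne'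
      linarith
    rw [hsplit]
    clear_value A B u v u' v'
    have hone : u / A - v / B ≤ t := by
      rw [div_sub_div _ _ hA.ne' hB.ne', div_le_iff₀ (mul_pos hA hB)]
      rw [← hAuu, ← hBvv]
      have := onesided ht0 h1.le hu0 hv0 hu'0 hv'0 huv hvu huv' hvu'
      linarith
    linarith

/-- The Hedge stationary policy. -/
noncomputable def hedge (β η : ℝ) {M : ℕ} (s : Fin M → ℝ) (j : Fin M) : ℝ :=
  (1 - η) * Real.exp (β * s j) / (∑ k, Real.exp (β * s k)) + η / M

/-- the Hedge policy is Lipschitz from the supremum norm to the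
ℓ1-norm with constant `2(1−η)β`. -/
theorem hedge_lipschitz {M : ℕ} (hM : 1 ≤ M)
    (β η : ℝ) (hβ : 0 < β) (hη : η ∈ Set.Icc (0 : ℝ) 1)
    (x y : Fin M → ℝ) :
    ∑ j : Fin M, |hedge β η x j - hedge β η y j| ≤ 2 * (1 - η) * β * ‖x - y‖ := by
  haveI : NeZero M := ⟨by omega⟩
  have hη1 : 0 ≤ 1 - η := by linarith [hη.2]
  have hnorm : 0 ≤ ‖x - y‖ := norm_nonneg _
  have htv := tv_bound (fun j => β * x j) (fun j => β * y j) (β * ‖x - y‖)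
    (by positivity)
    (fun j => by
      have h1 : |x j - y j| ≤ ‖x - y‖ := by
        have := norm_le_pi_norm (x - y) j
        simpa [Real.norm_eq_abs] using this
      calc |β * x j - β * y j| = β * |x j - y j| := by
            rw [← mul_sub, abs_mul, abs_of_pos hβ]
        _ ≤ β * ‖x - y‖ := by
            exact mul_le_mul_of_nonneg_left h1 hβ.le)
  have hrw : ∀ j : Fin M, |hedge β η x j - hedge β η y j|
      = (1 - η) * |Real.exp (β * x j) / (∑ k, Real.exp (β * x k))
          - Real.exp (β * y j) / (∑ k, Real.exp (β * y k))| := by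
    intro j
    have : hedge β η x j - hedge β η y j
        = (1 - η) * (Real.exp (β * x j) / (∑ k, Real.exp (β * x k))
            - Real.exp (β * y j) / (∑ k, Real.exp (β * y k))) := by
      simp only [hedge]
      ring
    rw [this, abs_mul, abs_of_nonneg hη1]
  calc ∑ j : Fin M, |hedge β η x j - hedge β η y j|
      = (1 - η) * ∑ j : Fin M, |Real.exp (β * x j) / (∑ k, Real.exp (β * x k))
          - Real.exp (β * y j) / (∑ k, Real.exp (β * y k))| := by
        rw [Finset.mul_sum]; exact Finset.sum_congr rfl fun j _ => hrw j
    _ ≤ (1 - η) * (2 * (β * ‖x - y‖)) := mul_le_mul_of_nonneg_left htv hη1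
    _ = 2 * (1 - η) * β * ‖x - y‖ := by ring
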